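/- (Doeblin's theorem, quantitative form) Let X be a Polish space with Borel σ-algebra, Q a Markov transition kernel on X, and suppose there exist λ ∈ (0,1) and a Borel probability measure μ such that Q(x,·) ≥ λ μ(·) for every x ∈ X. Then there is a unique invariant probability measure μ* for Q, and for every bounded Borel measurable f : X → ℝ and every n ∈ ℕ, ‖Qⁿf − ∫ f dμ*‖_∞ ≤ 2(1−λ)ⁿ ‖f‖_∞. -/

import Mathlib

open MeasureTheory ProbabilityTheory

/-- Iterates of a Markov transition kernel: `iterKernel κ n = κⁿ`. -/
noncomputable def iterKernel {X : Type*} [MeasurableSpace X]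
    (κ : Kernel X X) : ℕ → Kernel X X
  | 0 => Kernel.id
  | n + 1 => κ.comp (iterKernel κ n)


open scoped ENNReal NNReal

section Doeblin
variable {X : Type*} [MeasurableSpace X]

lemma doeblin_integrable (ν : Measure X) [IsFiniteMeasure ν] {f : X → ℝ} (hf : Measurable f)
    {M : ℝ} (hb : ∀ x, |f x| ≤ M) : Integrable f ν :=
  ⟨hf.aestronglyMeasurable, HasFiniteIntegral.of_bounded (C := M)
    (Filter.Eventually.of_forall fun x => by simpa [Real.norm_eq_abs] using hb x)⟩

lemma doeblin_repr (ν : Measure X) [IsFiniteMeasure ν] {f : X → ℝ} (hf : Measurable f)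
    {M : ℝ} (hb : ∀ x, |f x| ≤ M) :
    ∫ y, f y ∂ν = (∫⁻ y, ENNReal.ofReal (f y) ∂ν).toReal
      - (∫⁻ y, ENNReal.ofReal (-f y) ∂ν).toReal :=
  integral_eq_lintegral_pos_part_sub_lintegral_neg_part (doeblin_integrable ν hf hb)

lemma doeblin_measurable_integral {k : X → Measure X} (hk : Measurable k)
    (hfin : ∀ x, k x Set.univ ≤ 1) {f : X → ℝ} (hf : Measurable f)
    {M : ℝ} (hb : ∀ x, |f x| ≤ M) :
    Measurable (fun x => ∫ y, f y ∂(k x)) := by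
  have hrepr : ∀ x, ∫ y, f y ∂(k x) = (∫⁻ y, ENNReal.ofReal (f y) ∂(k x)).toReal
      - (∫⁻ y, ENNReal.ofReal (-f y) ∂(k x)).toReal := fun x => by
    haveI : IsFiniteMeasure (k x) := ⟨lt_of_le_of_lt (hfin x) ENNReal.one_lt_top⟩
    exact doeblin_repr _ hf hb
  simp_rw [hrepr]
  exact (((Measure.measurable_lintegral hf.ennreal_ofReal).comp hk).ennreal_toReal).sub
    (((Measure.measurable_lintegral hf.neg.ennreal_ofReal).comp hk).ennreal_toReal)

lemma doeblin_integral_bind (m : Measure X) [IsFiniteMeasure m] {k : X → Measure X}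
    (hk : Measurable k) (hfin : ∀ x, k x Set.univ ≤ 1) {f : X → ℝ} (hf : Measurable f)
    {M : ℝ} (hb : ∀ x, |f x| ≤ M) :
    ∫ y, f y ∂(m.bind k) = ∫ x, ∫ y, f y ∂(k x) ∂m := by
  haveI hfinkx : ∀ x, IsFiniteMeasure (k x) := fun x =>
    ⟨lt_of_le_of_lt (hfin x) ENNReal.one_lt_top⟩
  haveI : IsFiniteMeasure (m.bind k) := by
    constructor
    rw [Measure.bind_apply MeasurableSet.univ hk.aemeasurable]
    calc ∫⁻ x, k x Set.univ ∂m ≤ ∫⁻ _, 1 ∂m := lintegral_mono hfin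
    _ = m Set.univ := by simp
    _ < ⊤ := measure_lt_top m _
  set gp : X → ℝ≥0∞ := fun y => ENNReal.ofReal (f y) with hgp
  set gn : X → ℝ≥0∞ := fun y => ENNReal.ofReal (-f y) with hgn
  have hgpm : Measurable gp := hf.ennreal_ofReal
  have hgnm : Measurable gn := hf.neg.ennreal_ofReal
  have hApm : Measurable fun x => ∫⁻ y, gp y ∂(k x) := (Measure.measurable_lintegral hgpm).comp hk
  have hAnm : Measurable fun x => ∫⁻ y, gn y ∂(k x) := (Measure.measurable_lintegral hgnm).comp hk
  set C := ENNReal.ofReal M with hC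
  have hble : ∀ (g : X → ℝ≥0∞), (∀ y, g y ≤ C) → ∀ x, ∫⁻ y, g y ∂(k x) ≤ C := by
    intro g hg x
    calc ∫⁻ y, g y ∂(k x) ≤ ∫⁻ _, C ∂(k x) := lintegral_mono hg
    _ = C * k x Set.univ := lintegral_const C
    _ ≤ C * 1 := mul_le_mul_right (hfin x) C
    _ = C := mul_one C
  have hgple : ∀ y, gp y ≤ C := fun y =>
    ENNReal.ofReal_le_ofReal ((le_abs_self _).trans (hb y))
  have hgnle : ∀ y, gn y ≤ C := fun y =>
    ENNReal.ofReal_le_ofReal ((neg_le_abs _).trans (hb y))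
  have hMabs : C.toReal ≤ |M| := by
    rw [hC, ENNReal.toReal_ofReal']
    exact max_le (le_abs_self M) (abs_nonneg M)
  have hintA : Integrable (fun x => (∫⁻ y, gp y ∂(k x)).toReal) m :=
    doeblin_integrable m hApm.ennreal_toReal (M := |M|) (fun x => by
      rw [abs_of_nonneg ENNReal.toReal_nonneg]
      exact le_trans (ENNReal.toReal_mono ENNReal.ofReal_ne_top (hble gp hgple x)) hMabs)
  have hintB : Integrable (fun x => (∫⁻ y, gn y ∂(k x)).toReal) m :=
    doeblin_integrable m hAnm.ennreal_toReal (M := |M|) (fun x => by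
      rw [abs_of_nonneg ENNReal.toReal_nonneg]
      exact le_trans (ENNReal.toReal_mono ENNReal.ofReal_ne_top (hble gn hgnle x)) hMabs)
  have hreprx : ∀ x, ∫ y, f y ∂(k x) = (∫⁻ y, gp y ∂(k x)).toReal - (∫⁻ y, gn y ∂(k x)).toReal :=
    fun x => doeblin_repr _ hf hb
  calc ∫ y, f y ∂(m.bind k)
      = (∫⁻ y, gp y ∂(m.bind k)).toReal - (∫⁻ y, gn y ∂(m.bind k)).toReal :=
        doeblin_repr _ hf hb
    _ = (∫⁻ x, ∫⁻ y, gp y ∂(k x) ∂m).toReal - (∫⁻ x, ∫⁻ y, gn y ∂(k x) ∂m).toReal := by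
        rw [Measure.lintegral_bind hk.aemeasurable hgpm.aemeasurable, Measure.lintegral_bind hk.aemeasurable hgnm.aemeasurable]
    _ = (∫ x, (∫⁻ y, gp y ∂(k x)).toReal ∂m) - ∫ x, (∫⁻ y, gn y ∂(k x)).toReal ∂m := by
        rw [integral_toReal hApm.aemeasurable (Filter.Eventually.of_forall fun x =>
              lt_of_le_of_lt (hble gp hgple x) ENNReal.ofReal_lt_top),
            integral_toReal hAnm.aemeasurable (Filter.Eventually.of_forall fun x =>
              lt_of_le_of_lt (hble gn hgnle x) ENNReal.ofReal_lt_top)]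
    _ = ∫ x, ((∫⁻ y, gp y ∂(k x)).toReal - (∫⁻ y, gn y ∂(k x)).toReal) ∂m :=
        (integral_sub hintA hintB).symm
    _ = ∫ x, ∫ y, f y ∂(k x) ∂m := by simp_rw [hreprx]

end Doeblin

set_option maxHeartbeats 1000000 in
/-- Doeblin's theorem, quantitative form: if a Markov kernel `κ`
on a Polish space satisfies the minorization `κ x · ≥ λ μ ·` for a probability
measure `μ` and some `λ ∈ (0,1)`, then `κ` has a unique invariant probability
measure `μ*`, and for every bounded measurable `f` and all `n`,
`‖κⁿ f − ∫ f dμ*‖_∞ ≤ 2 (1−λ)ⁿ ‖f‖_∞`. -/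
theorem stmt5 {X : Type*} [MeasurableSpace X] [TopologicalSpace X]
    [PolishSpace X] [BorelSpace X]
    (κ : Kernel X X) [IsMarkovKernel κ]
    (lam : ℝ) (hlam : lam ∈ Set.Ioo (0:ℝ) 1)
    (μ : Measure X) [IsProbabilityMeasure μ]
    (hminor : ∀ x : X, ∀ s : Set X, MeasurableSet s →
      ENNReal.ofReal lam * μ s ≤ κ x s) :
    ∃ μstar : Measure X, IsProbabilityMeasure μstar ∧
      μstar.bind (fun x => κ x) = μstar ∧
      (∀ ν : Measure X, IsProbabilityMeasure ν →
        ν.bind (fun x => κ x) = ν → ν = μstar) ∧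
      ∀ f : X → ℝ, Measurable f → ∀ M : ℝ, (∀ x, |f x| ≤ M) →
        ∀ (n : ℕ) (x : X),
          |(∫ y, f y ∂(iterKernel κ n x)) - ∫ y, f y ∂μstar| ≤
            2 * (1 - lam)^n * M := by
  obtain ⟨hlam0, hlam1⟩ := hlam
  set lamE := ENNReal.ofReal lam with hlamEdef
  have hlamEne : lamE ≠ 0 := (ENNReal.ofReal_pos.mpr hlam0).ne'
  have hlamEtop : lamE ≠ ⊤ := ENNReal.ofReal_ne_top
  have hlamE1 : lamE ≤ 1 := by
    rw [hlamEdef, ← ENNReal.ofReal_one]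
    exact ENNReal.ofReal_le_ofReal hlam1.le
  have hκm : Measurable (fun x => (κ x : Measure X)) := κ.measurable
  have hκuniv : ∀ x : X, (κ x) Set.univ = 1 := fun x => measure_univ
  -- the residual kernel
  have hle : ∀ x, lamE • μ ≤ κ x := fun x => Measure.le_iff.mpr fun s hs => by
    simpa [Measure.smul_apply, smul_eq_mul] using hminor x s hs
  haveI : IsFiniteMeasure (lamE • μ) := by
    constructor
    simp only [Measure.smul_apply, smul_eq_mul, measure_univ, mul_one]
    exact hlamEtop.lt_top
  set ηf : X → Measure X := fun x => κ x - lamE • μ with hηfdef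
  have hηapp : ∀ x, ∀ s : Set X, MeasurableSet s → ηf x s = κ x s - lamE * μ s := by
    intro x s hs
    rw [hηfdef]
    simp only
    rw [Measure.sub_apply hs (hle x), Measure.smul_apply, smul_eq_mul]
  have hηadd : ∀ x, ηf x + lamE • μ = κ x := fun x => Measure.sub_add_cancel_of_le (hle x)
  have hηuniv : ∀ x, ηf x Set.univ = ENNReal.ofReal (1 - lam) := by
    intro x
    rw [hηapp x Set.univ MeasurableSet.univ, measure_univ, measure_univ, mul_one,
      ENNReal.ofReal_sub 1 hlam0.le, ENNReal.ofReal_one]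
  have hηm : Measurable ηf := Measure.measurable_of_measurable_coe _ fun s hs => by
    simp_rw [hηapp _ s hs]
    exact (κ.measurable_coe hs).sub measurable_const
  haveI hηfin : ∀ x, IsFiniteMeasure (ηf x) := fun x => by
    constructor; rw [hηuniv x]; exact ENNReal.ofReal_lt_top
  have hηunivR : ∀ x, ((ηf x) Set.univ).toReal = 1 - lam := fun x => by
    rw [hηuniv x, ENNReal.toReal_ofReal (by linarith)]
  have hηle1 : ∀ x, ηf x Set.univ ≤ 1 := fun x => by
    rw [hηuniv x, ← ENNReal.ofReal_one]
    exact ENNReal.ofReal_le_ofReal (by linarith)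
  have hκle1 : ∀ x : X, (κ x) Set.univ ≤ 1 := fun x => (hκuniv x).le
  -- integral decomposition
  have hκint : ∀ (f : X → ℝ), Measurable f → ∀ (M : ℝ), (∀ z, |f z| ≤ M) → ∀ x,
      ∫ y, f y ∂(κ x) = (∫ y, f y ∂(ηf x)) + lam * ∫ y, f y ∂μ := by
    intro f hf M hb x
    conv_lhs => rw [← hηadd x]
    rw [integral_add_measure (doeblin_integrable _ hf hb) (doeblin_integrable _ hf hb),
      integral_smul_measure]
    rw [hlamEdef, ENNReal.toReal_ofReal hlam0.le, smul_eq_mul]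
  -- one-step oscillation contraction
  have hosc1 : ∀ (f : X → ℝ), Measurable f → ∀ (M D : ℝ), (∀ z, |f z| ≤ M) →
      (∀ z w, |f z - f w| ≤ D) → ∀ x y,
      |(∫ z, f z ∂(κ x)) - ∫ z, f z ∂(κ y)| ≤ (1 - lam) * D := by
    intro f hf M D hb hD x y
    rw [hκint f hf M hb x, hκint f hf M hb y]
    have heq : (∫ z, f z ∂(ηf x)) + lam * (∫ y, f y ∂μ) - ((∫ z, f z ∂(ηf y)) + lam * ∫ y, f y ∂μ)
        = (∫ z, f z ∂(ηf x)) - ∫ z, f z ∂(ηf y) := by ring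
    rw [heq]
    set a := ∫ z, f z ∂(ηf x) with ha
    set b := ∫ z, f z ∂(ηf y) with hb'
    set mR := 1 - lam with hmR
    have hmR0 : 0 < mR := by rw [hmR]; linarith
    have hM0 : 0 ≤ M := le_trans (abs_nonneg _) (hb x)
    have hD0 : 0 ≤ D := le_trans (abs_nonneg _) (hD x x)
    have hinner : ∀ u, ∫ v, (f u - f v) ∂(ηf y) = mR * f u - b := by
      intro u
      rw [integral_sub (integrable_const _) (doeblin_integrable _ hf hb), integral_const,
        measureReal_def, hηunivR y, smul_eq_mul]
    have hinnerbdd : ∀ u, |mR * f u - b| ≤ D * mR := by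
      intro u
      rw [← hinner u]
      calc |∫ v, (f u - f v) ∂(ηf y)| ≤ ∫ v, |f u - f v| ∂(ηf y) := by
            simpa [Real.norm_eq_abs] using
              norm_integral_le_integral_norm (μ := ηf y) (fun v => f u - f v)
        _ ≤ ∫ _, D ∂(ηf y) := by
            apply integral_mono _ (integrable_const _) (fun v => hD u v)
            exact (doeblin_integrable _ (measurable_const.sub hf).abs
              (M := 2 * M) (fun v => by
                rw [abs_abs]
                calc |f u - f v| ≤ |f u| + |f v| := abs_sub _ _
                  _ ≤ 2 * M := by have := hb u; have := hb v; linarith))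
        _ = mR * D := by rw [integral_const, measureReal_def, hηunivR y, smul_eq_mul]
        _ = D * mR := mul_comm _ _
    have houter : ∫ u, (mR * f u - b) ∂(ηf x) = mR * a - mR * b := by
      rw [integral_sub (Integrable.const_mul (doeblin_integrable _ hf hb) mR) (integrable_const _),
        integral_const_mul, integral_const, measureReal_def, hηunivR x, smul_eq_mul, mul_comm mR b]
    have houterbdd : |mR * a - mR * b| ≤ D * mR * mR := by
      rw [← houter]
      calc |∫ u, (mR * f u - b) ∂(ηf x)| ≤ ∫ u, |mR * f u - b| ∂(ηf x) := by
            simpa [Real.norm_eq_abs] using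
              norm_integral_le_integral_norm (μ := ηf x) (fun u => mR * f u - b)
        _ ≤ ∫ _, D * mR ∂(ηf x) := by
            apply integral_mono _ (integrable_const _) hinnerbdd
            exact (doeblin_integrable _ ((measurable_const.mul hf).sub measurable_const).abs
              (M := mR * M + |b|) (fun u => by
                rw [abs_abs]
                calc |mR * f u - b| ≤ |mR * f u| + |b| := abs_sub _ _
                  _ ≤ mR * M + |b| := by
                      rw [abs_mul, abs_of_pos hmR0]
                      have : |f u| ≤ M := hb u
                      nlinarith))
        _ = mR * (D * mR) := by rw [integral_const, measureReal_def, hηunivR x, smul_eq_mul]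
        _ = D * mR * mR := by ring
    have : mR * |a - b| ≤ (D * mR) * mR := by
      calc mR * |a - b| = |mR * a - mR * b| := by rw [← mul_sub, abs_mul, abs_of_pos hmR0]
        _ ≤ D * mR * mR := houterbdd
    have habs : |a - b| ≤ D * mR :=
      le_of_mul_le_mul_left (by calc mR * |a - b| ≤ D * mR * mR := this
        _ = mR * (D * mR) := by ring) hmR0
    calc |a - b| ≤ D * mR := habs
      _ = (1 - lam) * D := by rw [hmR]; ring
  -- Markov property of iterates
  have hiterM : ∀ n, IsMarkovKernel (iterKernel κ n) := by
    intro n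
    induction n with
    | zero => rw [show iterKernel κ 0 = Kernel.id from rfl]; infer_instance
    | succ n ih =>
      rw [show iterKernel κ (n+1) = κ.comp (iterKernel κ n) from rfl]
      haveI := ih
      infer_instance
  have hiterle1 : ∀ n (x : X), (iterKernel κ n x) Set.univ ≤ 1 := fun n x => by
    haveI := hiterM n; exact measure_univ.le
  have hiterm : ∀ n, Measurable (fun x => (iterKernel κ n x : Measure X)) := fun n =>
    (iterKernel κ n).measurable
  have hiterstep : ∀ n (f : X → ℝ), Measurable f → ∀ M : ℝ, (∀ z, |f z| ≤ M) → ∀ x : X,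
      ∫ y, f y ∂(iterKernel κ (n+1) x) = ∫ z, (∫ y, f y ∂(κ z)) ∂(iterKernel κ n x) := by
    intro n f hf M hb x
    have h1 : iterKernel κ (n+1) x = (iterKernel κ n x).bind (fun z => (κ z : Measure X)) := by
      rw [show iterKernel κ (n+1) = κ.comp (iterKernel κ n) from rfl, Kernel.comp_apply]
    rw [h1]
    haveI := hiterM n
    exact doeblin_integral_bind _ hκm hκle1 hf hb
  have hiter0 : ∀ (f : X → ℝ), Measurable f → ∀ z : X,
      ∫ w, f w ∂(iterKernel κ 0 z) = f z := by
    intro f hf z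
    rw [show iterKernel κ 0 = (Kernel.id : Kernel X X) from rfl, Kernel.id_apply, integral_dirac]
  -- uniform bound for kernel averages
  have hbound : ∀ (k : X → Measure X), (∀ z, IsProbabilityMeasure (k z)) → ∀ (f : X → ℝ),
      Measurable f → ∀ M : ℝ, (∀ z, |f z| ≤ M) → ∀ x, |∫ y, f y ∂(k x)| ≤ M := by
    intro k hk f hf M hb x
    haveI := hk x
    calc |∫ y, f y ∂(k x)| ≤ ∫ y, |f y| ∂(k x) := by
          simpa [Real.norm_eq_abs] using norm_integral_le_integral_norm (μ := k x) f
      _ ≤ ∫ _, M ∂(k x) := integral_mono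
          (doeblin_integrable _ hf.abs (M := M) (fun z => by rw [abs_abs]; exact hb z))
          (integrable_const _) hb
      _ = M := by simp
  -- n-step oscillation contraction
  have hoscn : ∀ n (f : X → ℝ), Measurable f → ∀ M D : ℝ, (∀ z, |f z| ≤ M) →
      (∀ z w, |f z - f w| ≤ D) → ∀ x y,
      |(∫ z, f z ∂(iterKernel κ n x)) - ∫ z, f z ∂(iterKernel κ n y)| ≤ (1 - lam)^n * D := by
    intro n
    induction n with
    | zero =>
      intro f hf M D hb hD x y
      rw [hiter0 f hf x, hiter0 f hf y, pow_zero, one_mul]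
      exact hD x y
    | succ n ih =>
      intro f hf M D hb hD x y
      rw [hiterstep n f hf M hb x, hiterstep n f hf M hb y]
      have hgm : Measurable (fun z => ∫ y, f y ∂(κ z)) :=
        doeblin_measurable_integral hκm hκle1 hf hb
      have hgb : ∀ z, |∫ y, f y ∂(κ z)| ≤ M := hbound _ (fun z => inferInstance) f hf M hb
      have hgD : ∀ z w, |(∫ y, f y ∂(κ z)) - ∫ y, f y ∂(κ w)| ≤ (1 - lam) * D :=
        hosc1 f hf M D hb hD
      calc |(∫ z, (∫ y, f y ∂(κ z)) ∂(iterKernel κ n x))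
            - ∫ z, (∫ y, f y ∂(κ z)) ∂(iterKernel κ n y)|
          ≤ (1 - lam)^n * ((1 - lam) * D) := ih _ hgm M ((1-lam)*D) hgb hgD x y
        _ = (1 - lam)^(n+1) * D := by ring
  -- construction of the invariant measure
  set ρ : ℕ → Measure X := fun n => (fun ν : Measure X => ν.bind ηf)^[n] μ with hρdef
  have hρsucc : ∀ n, ρ (n+1) = (ρ n).bind ηf := fun n => by
    rw [hρdef]; simp only; rw [Function.iterate_succ_apply']
  have hρ0 : ρ 0 = μ := rfl
  set mE := ENNReal.ofReal (1 - lam) with hmEdef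
  have hmE1 : 1 - lamE = mE := by
    rw [hmEdef, ENNReal.ofReal_sub 1 hlam0.le, ENNReal.ofReal_one, hlamEdef]
  have hρuniv : ∀ n, ρ n Set.univ = mE ^ n := by
    intro n
    induction n with
    | zero => simp [hρ0]
    | succ n ih =>
      rw [hρsucc n, Measure.bind_apply MeasurableSet.univ hηm.aemeasurable]
      calc ∫⁻ x, ηf x Set.univ ∂(ρ n) = ∫⁻ _, mE ∂(ρ n) := by
            apply lintegral_congr; intro x; rw [hηuniv x]
        _ = mE * ρ n Set.univ := lintegral_const mE
        _ = mE ^ (n+1) := by rw [ih, pow_succ]; ring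
  set μstar : Measure X := lamE • Measure.sum ρ with hμstar
  have hμstarapp : ∀ s : Set X, MeasurableSet s → μstar s = lamE * ∑' n, ρ n s := by
    intro s hs
    rw [hμstar, Measure.smul_apply, Measure.sum_apply _ hs, smul_eq_mul]
  have hgeom : ∑' n : ℕ, mE ^ n = lamE⁻¹ := by
    rw [ENNReal.tsum_geometric, ← hmE1, ENNReal.sub_sub_cancel ENNReal.one_ne_top hlamE1]
  haveI hμstarprob : IsProbabilityMeasure μstar := by
    constructor
    rw [hμstarapp Set.univ MeasurableSet.univ]
    simp_rw [hρuniv]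
    rw [hgeom, ENNReal.mul_inv_cancel hlamEne hlamEtop]
  have hκs : ∀ (s : Set X), MeasurableSet s → ∀ x, (κ x) s = ηf x s + lamE * μ s := by
    intro s hs x
    conv_lhs => rw [← hηadd x]
    rw [Measure.add_apply, Measure.smul_apply, smul_eq_mul]
  have hinveq : μstar.bind (fun x => (κ x : Measure X)) = μstar := by
    ext s hs
    rw [Measure.bind_apply hs hκm.aemeasurable]
    have h1 : ∫⁻ x, (κ x) s ∂μstar = ∫⁻ x, (ηf x s + lamE * μ s) ∂μstar := by
      apply lintegral_congr; intro x; rw [hκs s hs x]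
    rw [h1, lintegral_add_right _ measurable_const, lintegral_const, measure_univ, mul_one]
    have h2 : ∫⁻ x, ηf x s ∂μstar = lamE * ∑' n, ρ (n+1) s := by
      rw [hμstar, lintegral_smul_measure, lintegral_sum_measure]
      congr 1
      apply tsum_congr; intro n
      rw [← Measure.bind_apply hs hηm.aemeasurable, ← hρsucc n]
    rw [h2, hμstarapp s hs]
    conv_rhs => rw [tsum_eq_zero_add' ENNReal.summable]
    rw [hρ0, mul_add]
    ring
  -- invariant measures pull back through iterates
  have hCn : ∀ (ξ : Measure X), IsProbabilityMeasure ξ → ξ.bind (fun x => (κ x : Measure X)) = ξ →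
      ∀ n (f : X → ℝ), Measurable f → ∀ M : ℝ, (∀ z, |f z| ≤ M) →
      ∫ y, f y ∂ξ = ∫ z, (∫ y, f y ∂(iterKernel κ n z)) ∂ξ := by
    intro ξ hξ hinv n
    haveI := hξ
    induction n with
    | zero =>
      intro f hf M hb
      simp_rw [hiter0 f hf]
    | succ n ih =>
      intro f hf M hb
      have hgm : Measurable (fun z => ∫ y, f y ∂(κ z)) :=
        doeblin_measurable_integral hκm hκle1 hf hb
      have hgb : ∀ z, |∫ y, f y ∂(κ z)| ≤ M := hbound _ (fun z => inferInstance) f hf M hb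
      have h1 : ∫ y, f y ∂ξ = ∫ z, (∫ y, f y ∂(κ z)) ∂ξ := by
        conv_lhs => rw [← hinv]
        exact doeblin_integral_bind _ hκm hκle1 hf hb
      rw [h1, ih _ hgm M hgb]
      apply integral_congr_ae
      apply Filter.Eventually.of_forall
      intro z
      exact (hiterstep n f hf M hb z).symm
  -- the quantitative bound
  have hquant : ∀ (f : X → ℝ), Measurable f → ∀ M : ℝ, (∀ z, |f z| ≤ M) → ∀ n (x : X),
      |(∫ y, f y ∂(iterKernel κ n x)) - ∫ y, f y ∂μstar| ≤ 2 * (1 - lam)^n * M := by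
    intro f hf M hb n x
    set c := ∫ y, f y ∂(iterKernel κ n x) with hc
    have hM0 : 0 ≤ M := le_trans (abs_nonneg _) (hb x)
    have hiterintm : Measurable (fun z => ∫ y, f y ∂(iterKernel κ n z)) :=
      doeblin_measurable_integral (hiterm n) (hiterle1 n) hf hb
    have hiterintb : ∀ z, |∫ y, f y ∂(iterKernel κ n z)| ≤ M :=
      hbound _ (fun z => by haveI := hiterM n; infer_instance) f hf M hb
    have h1 : ∫ y, f y ∂μstar = ∫ z, (∫ y, f y ∂(iterKernel κ n z)) ∂μstar :=
      hCn μstar hμstarprob hinveq n f hf M hb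
    have h2 : c - ∫ y, f y ∂μstar = ∫ z, (c - ∫ y, f y ∂(iterKernel κ n z)) ∂μstar := by
      rw [integral_sub (integrable_const _) (doeblin_integrable _ hiterintm hiterintb),
        integral_const, measureReal_def, measure_univ, ENNReal.toReal_one, one_smul, ← h1]
    rw [h2]
    have hDf : ∀ z w, |f z - f w| ≤ 2 * M := fun z w => by
      calc |f z - f w| ≤ |f z| + |f w| := abs_sub _ _
        _ ≤ 2*M := by have := hb z; have := hb w; linarith
    have h3 : ∀ z, |c - ∫ y, f y ∂(iterKernel κ n z)| ≤ (1-lam)^n * (2*M) := fun z =>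
      hoscn n f hf M (2*M) hb hDf x z
    calc |∫ z, (c - ∫ y, f y ∂(iterKernel κ n z)) ∂μstar|
        ≤ ∫ z, |c - ∫ y, f y ∂(iterKernel κ n z)| ∂μstar := by
          simpa [Real.norm_eq_abs] using norm_integral_le_integral_norm (μ := μstar)
            (fun z => c - ∫ y, f y ∂(iterKernel κ n z))
      _ ≤ ∫ _, (1-lam)^n * (2*M) ∂μstar := integral_mono
          (doeblin_integrable _ ((measurable_const.sub hiterintm).abs) (M := |c| + M)
            (fun z => by
              rw [abs_abs]
              calc |c - ∫ y, f y ∂(iterKernel κ n z)| ≤ |c| + |∫ y, f y ∂(iterKernel κ n z)| :=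
                    abs_sub _ _
                _ ≤ |c| + M := by linarith [hiterintb z]))
          (integrable_const _) h3
      _ = (1-lam)^n * (2*M) := by simp
      _ = 2 * (1-lam)^n * M := by ring
  -- uniqueness
  have huniq : ∀ ν : Measure X, IsProbabilityMeasure ν →
      ν.bind (fun x => (κ x : Measure X)) = ν → ν = μstar := by
    intro ν hν hinvν
    haveI := hν
    ext s hs
    set f : X → ℝ := s.indicator (fun _ => (1:ℝ)) with hfdef
    have hfm : Measurable f := measurable_const.indicator hs
    have hfb : ∀ z, |f z| ≤ 1 := fun z => by
      rw [hfdef]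
      by_cases h : z ∈ s <;>
        simp [Set.indicator_of_mem, Set.indicator_of_notMem, h]
    have hident : ∀ (ξ : Measure X), IsProbabilityMeasure ξ → ∫ y, f y ∂ξ = (ξ s).toReal := by
      intro ξ hξ
      rw [hfdef, integral_indicator_const (1:ℝ) hs, measureReal_def, smul_eq_mul, mul_one]
    have hd : ∀ n : ℕ, |(∫ y, f y ∂ν) - ∫ y, f y ∂μstar| ≤ 2 * (1-lam)^n := by
      intro n
      have h1 : ∫ y, f y ∂ν = ∫ z, (∫ y, f y ∂(iterKernel κ n z)) ∂ν :=
        hCn ν hν hinvν n f hfm 1 hfb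
      have hiterintm : Measurable (fun z => ∫ y, f y ∂(iterKernel κ n z)) :=
        doeblin_measurable_integral (hiterm n) (hiterle1 n) hfm hfb
      have hiterintb : ∀ z, |∫ y, f y ∂(iterKernel κ n z)| ≤ 1 :=
        hbound _ (fun z => by haveI := hiterM n; infer_instance) f hfm 1 hfb
      have h2 : (∫ y, f y ∂ν) - ∫ y, f y ∂μstar
          = ∫ z, ((∫ y, f y ∂(iterKernel κ n z)) - ∫ y, f y ∂μstar) ∂ν := by
        rw [integral_sub (doeblin_integrable _ hiterintm hiterintb) (integrable_const _),
          integral_const, measureReal_def, measure_univ, ENNReal.toReal_one, one_smul, ← h1]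
      rw [h2]
      have h3 : ∀ z, |(∫ y, f y ∂(iterKernel κ n z)) - ∫ y, f y ∂μstar| ≤ 2*(1-lam)^n :=
        fun z => by simpa using hquant f hfm 1 hfb n z
      calc |∫ z, ((∫ y, f y ∂(iterKernel κ n z)) - ∫ y, f y ∂μstar) ∂ν|
          ≤ ∫ z, |(∫ y, f y ∂(iterKernel κ n z)) - ∫ y, f y ∂μstar| ∂ν := by
            simpa [Real.norm_eq_abs] using norm_integral_le_integral_norm (μ := ν)
              (fun z => (∫ y, f y ∂(iterKernel κ n z)) - ∫ y, f y ∂μstar)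
        _ ≤ ∫ _, 2*(1-lam)^n ∂ν := integral_mono
            (doeblin_integrable _ ((hiterintm.sub measurable_const).abs)
              (M := 1 + |∫ y, f y ∂μstar|)
              (fun z => by
                rw [abs_abs]
                calc |(∫ y, f y ∂(iterKernel κ n z)) - ∫ y, f y ∂μstar|
                    ≤ |∫ y, f y ∂(iterKernel κ n z)| + |∫ y, f y ∂μstar| := abs_sub _ _
                  _ ≤ 1 + |∫ y, f y ∂μstar| := by linarith [hiterintb z]))
            (integrable_const _) h3
        _ = 2*(1-lam)^n := by simp
    have hzero : (∫ y, f y ∂ν) - ∫ y, f y ∂μstar = 0 := by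
      have htend : Filter.Tendsto (fun n : ℕ => 2 * (1-lam)^n) Filter.atTop (nhds 0) := by
        have h := tendsto_pow_atTop_nhds_zero_of_lt_one
          (by linarith : (0:ℝ) ≤ 1 - lam) (by linarith : (1:ℝ) - lam < 1)
        simpa using h.const_mul 2
      have hle0 : |(∫ y, f y ∂ν) - ∫ y, f y ∂μstar| ≤ 0 := ge_of_tendsto' htend hd
      exact abs_eq_zero.mp (le_antisymm hle0 (abs_nonneg _))
    have heq : (ν s).toReal = (μstar s).toReal := by
      rw [← hident ν hν, ← hident μstar hμstarprob]
      linarith [hzero]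
    exact (ENNReal.toReal_eq_toReal_iff' (measure_ne_top ν s) (measure_ne_top μstar s)).mp heq
  exact ⟨μstar, hμstarprob, hinveq, huniq, fun f hf M hb n x => hquant f hf M hb n x⟩
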